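/- Let n ≥ 1 and k ≥ 2 be integers, let T(n,k) be the graph on vertex set {1, 2, …, n} in which distinct vertices a and b are adjacent if and only if a ≢ b (mod k), and order the vertices by the natural order on {1,…,n}. Then for every i with 1 ≤ i ≤ n, the number of edges ab of T(n,k) with a ≤ i < b is at most i·((n−i)·(k−1)/k + 1). -/

import Mathlib

open Finset

lemma resid_count (n k i v : ℕ) (hk : 0 < k) (hv : v < k) :
    (n - i) / k ≤ ((Finset.Ico i n).filter (fun x => x % k = v)).card := by
  set m := (n - i) / k with hm
  rcases Nat.eq_zero_or_pos m with h | h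
  · simp [h]
  set a0 := i + (v + k - i % k) % k with ha0
  have hik : i % k < k := Nat.mod_lt _ hk
  have hikle : i % k ≤ i := Nat.mod_le _ _
  have ha0r : a0 % k = v := by
    have h1 : (i + (v + k - i % k) % k) % k = (i + (v + k - i % k)) % k := by
      rw [Nat.add_mod, Nat.mod_mod_of_dvd, ← Nat.add_mod]
      exact dvd_rfl
    have h2 : i + (v + k - i % k) = (i - i % k) + v + k := by omega
    rw [ha0, h1, h2]
    have h3 : (i - i % k) % k = 0 := by
      have := Nat.div_add_mod i k
      have : i - i % k = k * (i / k) := by omega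
      simp [this]
    rw [Nat.add_mod, Nat.add_mod (i - i % k), h3]
    simp [Nat.mod_eq_of_lt hv]
  have ha0lt : a0 < i + k := by
    have := Nat.mod_lt (v + k - i % k) hk
    omega
  have hmk : m * k ≤ n - i := by rw [hm]; exact Nat.div_mul_le_self _ _
  have hkle : k ≤ n - i := by
    by_contra hc
    push_neg at hc
    have : (n - i) / k = 0 := Nat.div_eq_of_lt hc
    omega
  rw [← Finset.card_range m]
  apply Finset.card_le_card_of_injOn (fun j => a0 + j * k)
  · intro j hj
    simp only [Finset.mem_coe, Finset.mem_range] at hj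
    simp only [Finset.mem_coe, Finset.mem_filter, Finset.mem_Ico]
    refine ⟨⟨by omega, ?_⟩, ?_⟩
    · have : j * k ≤ (m - 1) * k := Nat.mul_le_mul_right _ (by omega)
      have h4 : a0 + j * k < i + k + (m - 1) * k := by omega
      have h5 : k + (m - 1) * k = m * k := by
        have : m = 1 + (m - 1) := by omega
        nlinarith [this]
      omega
    · rw [Nat.add_mul_mod_self_right, ha0r]
  · intro j1 h1 j2 h2 he
    simp only at he
    have : j1 * k = j2 * k := by omega
    exact Nat.eq_of_mul_eq_mul_right hk this

lemma fin_filter_card (n : ℕ) (p : ℕ → Prop) [DecidablePred p] :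
    (Finset.univ.filter (fun v : Fin n => p v.val)).card
      = ((Finset.range n).filter p).card := by
  apply Finset.card_bij (fun v _ => v.val)
  · intro v hv; simp_all [Finset.mem_filter, Finset.mem_range, v.isLt]
  · intro a ha b hb hab; exact Fin.ext hab
  · intro b hb
    simp only [Finset.mem_filter, Finset.mem_range] at hb
    exact ⟨⟨b, hb.1⟩, by simp [hb.2], rfl⟩

def turanMod (n k : ℕ) : SimpleGraph (Fin n) where
  Adj a b := (a : ℕ) % k ≠ (b : ℕ) % k
  symm := ⟨fun a b h => h.symm⟩
  loopless := ⟨fun a h => h rfl⟩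

instance (n k : ℕ) : DecidableRel (turanMod n k).Adj :=
  fun a b => inferInstanceAs (Decidable ((a : ℕ) % k ≠ (b : ℕ) % k))

theorem turanMod_cut_le (n k : ℕ) (hn : 1 ≤ n) (hk : 2 ≤ k)
    (i : ℕ) (hi1 : 1 ≤ i) (hin : i ≤ n) :
    ((((turanMod n k).edgeFinset).filter
        (fun e => ∃ u ∈ e, ∃ v ∈ e, u.val < i ∧ i ≤ v.val)).card : ℝ)
      ≤ (i : ℝ) * (((n : ℝ) - (i : ℝ)) * ((k : ℝ) - 1) / (k : ℝ) + 1) := by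
  classical
  have hk0 : 0 < k := by omega
  set m := n - i with hm
  set U := Finset.univ.filter (fun u : Fin n => u.val < i) with hU
  set V := Finset.univ.filter (fun v : Fin n => i ≤ v.val) with hV
  set P := (U ×ˢ V).filter (fun p : Fin n × Fin n => p.1.val % k ≠ p.2.val % k) with hP
  -- Step A: the cut edges are covered by P via Sym2.mk
  have hA : (((turanMod n k).edgeFinset).filter
      (fun e => ∃ u ∈ e, ∃ v ∈ e, u.val < i ∧ i ≤ v.val)).card ≤ P.card := by
    apply Finset.card_le_card_of_surjOn (fun p : Fin n × Fin n => Sym2.mk p.1 p.2)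
    intro e he
    simp only [Finset.coe_filter, Set.mem_setOf_eq] at he
    obtain ⟨he, u, hu, v, hv, hui, hiv⟩ := he
    have huv : u ≠ v := by
      intro h; rw [h] at hui; omega
    have he2 : e = s(u, v) :=
      Sym2.eq_of_ne_mem huv hu hv (Sym2.mem_mk_left u v) (Sym2.mem_mk_right u v)
    have hadj : (turanMod n k).Adj u v := by
      rw [← SimpleGraph.mem_edgeSet, ← he2]
      exact SimpleGraph.mem_edgeFinset.mp he
    refine ⟨(u, v), ?_, he2.symm⟩
    simp only [Finset.coe_filter, Set.mem_setOf_eq, Finset.mem_product, hP, hU, hV,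
      Finset.mem_filter, Finset.mem_univ, true_and]
    exact ⟨⟨hui, hiv⟩, hadj⟩
  -- cardinalities of U, V
  have hUcard : U.card = i := by
    rw [hU, fin_filter_card n (fun x => x < i)]
    have : (Finset.range n).filter (fun x => x < i) = Finset.range i := by
      ext x; simp only [Finset.mem_filter, Finset.mem_range]; omega
    rw [this, Finset.card_range]
  have hVcard : V.card = m := by
    rw [hV, fin_filter_card n (fun x => i ≤ x)]
    have : (Finset.range n).filter (fun x => i ≤ x) = Finset.Ico i n := by
      ext x; simp only [Finset.mem_filter, Finset.mem_range, Finset.mem_Ico]; omega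
    rw [this, Nat.card_Ico]
  -- key inner bound
  have key : ∀ r, r < k → (V.filter fun v : Fin n => ¬ (r = v.val % k)).card ≤ m - m / k := by
    intro r hr
    have h1 : (V.filter fun v : Fin n => r = v.val % k).card
        + (V.filter fun v : Fin n => ¬ (r = v.val % k)).card = V.card :=
      Finset.card_filter_add_card_filter_not _
    have h2 : m / k ≤ (V.filter fun v : Fin n => r = v.val % k).card := by
      have e1 : (V.filter fun v : Fin n => r = v.val % k)
          = Finset.univ.filter (fun v : Fin n => i ≤ v.val ∧ r = v.val % k) := by
        rw [hV, Finset.filter_filter]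
      rw [e1, fin_filter_card n (fun x => i ≤ x ∧ r = x % k)]
      have e2 : ((Finset.range n).filter fun x => i ≤ x ∧ r = x % k)
          = (Finset.Ico i n).filter (fun x => x % k = r) := by
        ext x
        simp only [Finset.mem_filter, Finset.mem_range, Finset.mem_Ico]
        constructor
        · rintro ⟨h, h2, h3⟩; exact ⟨⟨h2, h⟩, h3.symm⟩
        · rintro ⟨⟨h2, h⟩, h3⟩; exact ⟨h, h2, h3.symm⟩
      rw [e2]
      exact resid_count n k i r hk0 hr
    omega
  -- Step B: P.card ≤ i * (m - m/k)
  have hB : P.card ≤ i * (m - m / k) := by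
    have hfib : ∀ p ∈ P, p.1 ∈ U := by
      intro p hp
      rw [hP] at hp
      exact (Finset.mem_product.mp (Finset.mem_filter.mp hp).1).1
    rw [Finset.card_eq_sum_card_fiberwise hfib]
    calc ∑ u ∈ U, (P.filter fun p => p.1 = u).card
        ≤ ∑ _u ∈ U, (m - m / k) := by
          apply Finset.sum_le_sum
          intro u hu
          have step : (P.filter fun p => p.1 = u).card
              ≤ (V.filter fun v : Fin n => ¬ (u.val % k = v.val % k)).card := by
            apply Finset.card_le_card_of_injOn (fun p => p.2)
            · intro p hp
              simp only [Finset.mem_coe, Finset.mem_filter, hP, Finset.mem_product] at hp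
              obtain ⟨⟨⟨hp1, hp2⟩, hp3⟩, hp4⟩ := hp
              rw [hp4] at hp3
              exact Finset.mem_filter.mpr ⟨hp2, hp3⟩
            · intro p hp q hq hpq
              simp only [Finset.coe_filter, Set.mem_setOf_eq] at hp hq
              exact Prod.ext (hp.2.trans hq.2.symm) hpq
          exact step.trans (key (u.val % k) (Nat.mod_lt _ hk0))
      _ = i * (m - m / k) := by rw [Finset.sum_const, hUcard, smul_eq_mul]
  -- put together and cast to ℝ
  have hC : (((turanMod n k).edgeFinset).filter
      (fun e => ∃ u ∈ e, ∃ v ∈ e, u.val < i ∧ i ≤ v.val)).card ≤ i * (m - m / k) :=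
    hA.trans hB
  have hq : m % k < k := Nat.mod_lt _ hk0
  have hqm := Nat.div_add_mod m k
  have hdm : m / k ≤ m := Nat.div_le_self _ _
  have hcast : ((i * (m - m / k) : ℕ) : ℝ)
      ≤ (i : ℝ) * (((n : ℝ) - (i : ℝ)) * ((k : ℝ) - 1) / (k : ℝ) + 1) := by
    have hni : (n : ℝ) - (i : ℝ) = (m : ℝ) := by
      rw [hm]; push_cast [Nat.cast_sub hin]; ring
    rw [hni]
    push_cast [Nat.cast_sub hdm]
    have hk0' : (0 : ℝ) < (k : ℝ) := by positivity
    apply mul_le_mul_of_nonneg_left _ (by positivity)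
    rw [div_add' _ _ _ hk0'.ne', le_div_iff₀ hk0']
    have h1 : (m : ℝ) = (k : ℝ) * ((m / k : ℕ) : ℝ) + ((m % k : ℕ) : ℝ) := by
      exact_mod_cast hqm.symm
    have h2 : ((m % k : ℕ) : ℝ) ≤ (k : ℝ) - 1 := by
      have : (m % k : ℕ) ≤ k - 1 := by omega
      calc ((m % k : ℕ) : ℝ) ≤ ((k - 1 : ℕ) : ℝ) := by exact_mod_cast this
        _ = (k : ℝ) - 1 := by push_cast [Nat.cast_sub (by omega : 1 ≤ k)]; ring
    nlinarith [h1, h2]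
  calc ((((turanMod n k).edgeFinset).filter
      (fun e => ∃ u ∈ e, ∃ v ∈ e, u.val < i ∧ i ≤ v.val)).card : ℝ)
      ≤ ((i * (m - m / k) : ℕ) : ℝ) := by exact_mod_cast hC
    _ ≤ _ := hcast
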